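/- arXiv:2307.04227 — 3 statements merged into one kernel-verified Lean document; each statement's English description precedes it below -/
import Mathlib

section
/- Let U ⊂ ℝ^ℓ be compact with Leb(U) > 0, y^∞ ∈ ℝ^d, and set A = max_{u∈U}{f(u)+p(u)·y^∞} with f, p continuous. Suppose S ⊂ U is closed with ε := A - sup_{u∈S}{f(u)+p(u)·y^∞} > 0 and L := Leb({u ∈ U : f(u)+p(u)·y^∞ ≥ A - ε/2}) > 0. Then for the Gibbs densities, limsup_{λ↓0} ∫_S Γ_λ(y^∞)(u) du = 0; in fact ∫_S Γ_λ(y^∞)(u) du ≤ (Leb(S)/L) e^{-ε/(2λ)}. -/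
open MeasureTheory Real Filter

/-- Laplace-type concentration of the Gibbs density. If `A` bounds
`f + p·y^∞` on `U`, `S ⊆ U` is closed with `f + p·y^∞ ≤ A - ε` on `S`, and
`L = Leb{u ∈ U : f(u)+p(u)·y^∞ ≥ A - ε/2} > 0`, then for every `λ > 0`,
`∫_S Γ_λ(y^∞) ≤ (Leb(S)/L) e^{-ε/(2λ)}`, and hence `∫_S Γ_λ(y^∞) → 0` as `λ ↓ 0`. -/
theorem gibbs_concentration_bound
    (ℓ d : ℕ) (U S : Set (EuclideanSpace ℝ (Fin ℓ)))
    (hUmeas : MeasurableSet U) (hUc : IsCompact U) (hUpos : 0 < volume U)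
    (hSU : S ⊆ U) (hScl : IsClosed S)
    (f : EuclideanSpace ℝ (Fin ℓ) → ℝ) (hf : Continuous f)
    (p : EuclideanSpace ℝ (Fin ℓ) → EuclideanSpace ℝ (Fin d)) (hp : Continuous p)
    (yinf : EuclideanSpace ℝ (Fin d)) (A ε : ℝ) (hε : 0 < ε)
    (hA : ∀ u ∈ U, f u + ∑ j, p u j * yinf j ≤ A)
    (hS : ∀ u ∈ S, f u + ∑ j, p u j * yinf j ≤ A - ε)
    (hL : 0 < (volume {u ∈ U | A - ε / 2 ≤ f u + ∑ j, p u j * yinf j}).toReal) :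
    (∀ lam : ℝ, 0 < lam →
      (∫ u in S, Real.exp ((f u + ∑ j, p u j * yinf j) / lam)
          / ∫ v in U, Real.exp ((f v + ∑ j, p v j * yinf j) / lam))
        ≤ ((volume S).toReal
            / (volume {u ∈ U | A - ε / 2 ≤ f u + ∑ j, p u j * yinf j}).toReal)
          * Real.exp (-ε / (2 * lam))) ∧
    Tendsto (fun lam : ℝ =>
        ∫ u in S, Real.exp ((f u + ∑ j, p u j * yinf j) / lam)
          / ∫ v in U, Real.exp ((f v + ∑ j, p v j * yinf j) / lam))
      (nhdsWithin 0 (Set.Ioi 0)) (nhds 0) := by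
  set g : EuclideanSpace ℝ (Fin ℓ) → ℝ := fun u => f u + ∑ j, p u j * yinf j with hgdef
  have hg : Continuous g := by
    apply hf.add
    exact continuous_finset_sum _ fun j _ => by fun_prop
  set T : Set (EuclideanSpace ℝ (Fin ℓ)) := {u ∈ U | A - ε / 2 ≤ g u} with hTdef
  have hTU : T ⊆ U := fun u hu => hu.1
  have hTm : MeasurableSet T := hUmeas.inter (measurableSet_le measurable_const hg.measurable)
  have hSc : IsCompact S := hUc.of_isClosed_subset hScl hSU
  have hUfin : volume U ≠ ⊤ := hUc.measure_lt_top.ne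
  have hSfin : volume S ≠ ⊤ := hSc.measure_lt_top.ne
  have hTfin : volume T ≠ ⊤ := (lt_of_le_of_lt (measure_mono hTU) hUc.measure_lt_top).ne
  set L : ℝ := (volume T).toReal with hLdef
  -- main bound
  have key : ∀ lam : ℝ, 0 < lam →
      (∫ u in S, Real.exp (g u / lam) / ∫ v in U, Real.exp (g v / lam))
        ≤ ((volume S).toReal / L) * Real.exp (-ε / (2 * lam)) := by
    intro lam hlam
    have hcont : Continuous fun u => Real.exp (g u / lam) := (hg.div_const lam).rexp
    have hintU : IntegrableOn (fun u => Real.exp (g u / lam)) U := hcont.continuousOn.integrableOn_compact hUc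
    have hintS : IntegrableOn (fun u => Real.exp (g u / lam)) S := hintU.mono_set hSU
    have hintT : IntegrableOn (fun u => Real.exp (g u / lam)) T := hintU.mono_set hTU
    set den := ∫ v in U, Real.exp (g v / lam) with hden
    set num := ∫ u in S, Real.exp (g u / lam) with hnum
    have hTlow : L * Real.exp ((A - ε / 2) / lam) ≤ ∫ u in T, Real.exp (g u / lam) := by
      have := setIntegral_mono_on (integrableOn_const hTfin) hintT hTm
        (fun u hu => Real.exp_le_exp.2 ((div_le_div_iff_of_pos_right hlam).2 hu.2))
      simpa [setIntegral_const, mul_comm, Measure.real] using this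
    have hTden : (∫ u in T, Real.exp (g u / lam)) ≤ den := by
      apply setIntegral_mono_set hintU
      · exact Filter.Eventually.of_forall fun u => (Real.exp_pos _).le
      · exact HasSubset.Subset.eventuallyLE hTU
    have hdenpos : 0 < den := lt_of_lt_of_le
      (mul_pos hL (Real.exp_pos _)) (hTlow.trans hTden)
    have hnumle : num ≤ (volume S).toReal * Real.exp ((A - ε) / lam) := by
      have := setIntegral_mono_on hintS (integrableOn_const hSfin)
        hSc.measurableSet
        (fun u hu => Real.exp_le_exp.2 ((div_le_div_iff_of_pos_right hlam).2 (hS u hu)))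
      simpa [setIntegral_const, mul_comm, Measure.real] using this
    have hnumnn : 0 ≤ num :=
      setIntegral_nonneg hSc.measurableSet fun u _ => (Real.exp_pos _).le
    have step : num / den ≤ ((volume S).toReal * Real.exp ((A - ε) / lam))
        / (L * Real.exp ((A - ε / 2) / lam)) := by
      apply div_le_div₀ (by positivity) hnumle (mul_pos hL (Real.exp_pos _))
        (hTlow.trans hTden)
    calc (∫ u in S, Real.exp (g u / lam) / den) = num / den := by
          rw [integral_div]
      _ ≤ ((volume S).toReal * Real.exp ((A - ε) / lam))
            / (L * Real.exp ((A - ε / 2) / lam)) := step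
      _ = ((volume S).toReal / L) * Real.exp (-ε / (2 * lam)) := by
          rw [show (-ε / (2 * lam)) = (A - ε) / lam - (A - ε / 2) / lam by
            field_simp; ring, Real.exp_sub]
          have hLne : L ≠ 0 := ne_of_gt hL
          field_simp
  constructor
  · exact key
  · have hnn : ∀ lam ∈ Set.Ioi (0:ℝ), 0 ≤
        ∫ u in S, Real.exp (g u / lam) / ∫ v in U, Real.exp (g v / lam) := by
      intro lam hlam
      exact setIntegral_nonneg hSc.measurableSet fun u _ => div_nonneg (Real.exp_pos _).le
        (setIntegral_nonneg hUmeas fun v _ => (Real.exp_pos _).le)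
    have hb : Tendsto (fun lam : ℝ => ((volume S).toReal / L) * Real.exp (-ε / (2 * lam)))
        (nhdsWithin 0 (Set.Ioi 0)) (nhds 0) := by
      have hexp : Tendsto (fun lam : ℝ => Real.exp (-ε / (2 * lam)))
          (nhdsWithin 0 (Set.Ioi 0)) (nhds 0) := by
        apply Real.tendsto_exp_atBot.comp
        have h1 : Tendsto (fun lam : ℝ => lam⁻¹ * (-ε/2)) (nhdsWithin 0 (Set.Ioi 0)) atBot :=
          Tendsto.atTop_mul_const_of_neg (by linarith) tendsto_inv_nhdsGT_zero
        refine h1.congr fun lam => by simp [div_eq_mul_inv, mul_inv]; ring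
      simpa using (hexp.const_mul ((volume S).toReal / L))
    refine tendsto_of_tendsto_of_tendsto_of_le_of_le' tendsto_const_nhds hb ?_ ?_
    · filter_upwards [self_mem_nhdsWithin] with lam hlam using hnn lam hlam
    · filter_upwards [self_mem_nhdsWithin] with lam hlam using key lam hlam
end

section
/- Fix λ > 0 and define Ψ_λ(y) = V_λ^{Γ_λ(y,·)} ∈ ℝ^d (the entropy-regularized continuation value of the Gibbs policy induced by y). Then y ∈ ℝ^d satisfies Ψ_λ(y) = y if and only if y = V^π_λ for some relaxed equilibrium π of the entropy-regularized MDP; in that case π = Γ_λ(y,·) is such an equilibrium. -/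
open MeasureTheory Real

lemma key_pt {a b : ℝ} (hb : 0 < b) (ha : 0 ≤ a) :
    a - b ≤ a * Real.log a - a * Real.log b := by
  rcases eq_or_lt_of_le ha with h | h
  · simp [← h]; linarith
  · have h1 : Real.log (b / a) ≤ b / a - 1 := Real.log_le_sub_one_of_pos (by positivity)
    have h2 : Real.log (b / a) = Real.log b - Real.log a := Real.log_div hb.ne' h.ne'
    have := mul_le_mul_of_nonneg_left h1 ha
    rw [h2] at this
    have hba : a * (b / a - 1) = b - a := by field_simp
    nlinarith

lemma key_pt_eq {a b : ℝ} (hb : 0 < b) (ha : 0 ≤ a)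
    (h : a * Real.log a - a * Real.log b = a - b) : a = b := by
  by_contra hne
  rcases eq_or_lt_of_le ha with h0 | h0
  · simp [← h0] at h; linarith
  · have hba : b / a ≠ 1 := by
      intro hh; apply hne; field_simp at hh; linarith
    have h1 : Real.log (b / a) < b / a - 1 :=
      Real.log_lt_sub_one_of_pos (by positivity) hba
    have h2 : Real.log (b / a) = Real.log b - Real.log a := Real.log_div hb.ne' h0.ne'
    have := mul_lt_mul_of_pos_left h1 h0
    rw [h2] at this
    have hba2 : a * (b / a - 1) = b - a := by field_simp
    nlinarith

section Gibbs
variable {α : Type*} [MeasureSpace α] {U : Set α} {g : α → ℝ} {lam M : ℝ}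

lemma integrableOn_of_bdd (hUmeas : MeasurableSet U) (hUfin : volume U ≠ ⊤)
    {f : α → ℝ} (hf : AEStronglyMeasurable f (volume.restrict U)) {C : ℝ}
    (hC : ∀ u ∈ U, |f u| ≤ C) : IntegrableOn f U := by
  refine Integrable.mono' (g := fun _ => C) ?_ hf ?_
  · exact integrableOn_const hUfin
  · rw [ae_restrict_iff' hUmeas]
    filter_upwards with u hu using by simpa using hC u hu

lemma expInt (hUmeas : MeasurableSet U) (hUfin : volume U ≠ ⊤)
    (hg : Measurable g) (hM : ∀ u ∈ U, |g u| ≤ M) (hlam : 0 < lam) :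
    IntegrableOn (fun u => Real.exp (g u / lam)) U := by
  refine integrableOn_of_bdd hUmeas hUfin
    ((hg.div_const lam).exp.aestronglyMeasurable) (C := Real.exp (M / lam)) ?_
  intro u hu
  rw [abs_of_pos (Real.exp_pos _)]
  exact Real.exp_le_exp.2 (by gcongr; exact (abs_le.1 (hM u hu)).2)

lemma Zpos (hUmeas : MeasurableSet U) (hUfin : volume U ≠ ⊤) (hUpos : 0 < volume U)
    (hg : Measurable g) (hM : ∀ u ∈ U, |g u| ≤ M) (hlam : 0 < lam) :
    0 < ∫ u in U, Real.exp (g u / lam) := by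
  have h := setIntegral_ge_of_const_le (c := Real.exp (-(M / lam))) hUmeas hUfin
    (fun u hu => Real.exp_le_exp.2 (by
      rw [show -(M/lam) = -M/lam by ring]
      gcongr
      exact (abs_le.1 (hM u hu)).1))
    (expInt hUmeas hUfin hg hM hlam)
  have hpos : 0 < (volume U).toReal := ENNReal.toReal_pos hUpos.ne' hUfin
  calc (0:ℝ) < Real.exp (-(M / lam)) * (volume U).toReal := by positivity
  _ ≤ _ := by rw [mul_comm]; exact h

lemma gibbs_core (hUmeas : MeasurableSet U) (hUfin : volume U ≠ ⊤) (hUpos : 0 < volume U)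
    (hg : Measurable g) (hM : ∀ u ∈ U, |g u| ≤ M) (hlam : 0 < lam)
    (ρ : α → ℝ) (hρm : Measurable ρ) (hρ0 : ∀ u ∈ U, 0 ≤ ρ u)
    (hρ1 : (∫ u in U, ρ u) = 1)
    (hρent : IntegrableOn (fun u => ρ u * Real.log (ρ u)) U) :
    (∫ u in U, g u * ρ u) - lam * ∫ u in U, ρ u * Real.log (ρ u)
      ≤ lam * Real.log (∫ u in U, Real.exp (g u / lam))
    ∧ ((∫ u in U, g u * ρ u) - lam * ∫ u in U, ρ u * Real.log (ρ u)
        = lam * Real.log (∫ u in U, Real.exp (g u / lam)) →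
       ∀ᵐ u ∂(volume.restrict U),
         ρ u = Real.exp (g u / lam) / ∫ v in U, Real.exp (g v / lam)) := by
  set Z : ℝ := ∫ u in U, Real.exp (g u / lam) with hZ
  have hZpos : 0 < Z := Zpos hUmeas hUfin hUpos hg hM hlam
  set γ : α → ℝ := fun u => Real.exp (g u / lam) / Z with hγ
  have hγpos : ∀ u, 0 < γ u := fun u => div_pos (Real.exp_pos _) hZpos
  have hlogγ : ∀ u, Real.log (γ u) = g u / lam - Real.log Z := fun u => by
    rw [hγ, Real.log_div (Real.exp_ne_zero _) hZpos.ne', Real.log_exp]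
  have hγint : IntegrableOn γ U := (expInt hUmeas hUfin hg hM hlam).div_const Z
  have hγ1 : (∫ u in U, γ u) = 1 := by
    simp only [hγ, integral_div]; exact div_self hZpos.ne'
  have hρint : IntegrableOn ρ U := by
    by_contra hc
    rw [MeasureTheory.integral_undef hc] at hρ1; norm_num at hρ1
  have hgρ : IntegrableOn (fun u => g u * ρ u) U := by
    refine Integrable.mono' (hρint.const_mul M) ((hg.mul hρm).aestronglyMeasurable) ?_
    rw [ae_restrict_iff' hUmeas]
    filter_upwards with u hu
    rw [Real.norm_eq_abs, abs_mul, abs_of_nonneg (hρ0 u hu)]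
    exact mul_le_mul_of_nonneg_right (hM u hu) (hρ0 u hu)
  have hfe : (fun u => ρ u * Real.log (γ u))
      = fun u => (g u * ρ u) / lam - Real.log Z * ρ u := funext fun u => by
    rw [hlogγ]; ring
  have hint2 : IntegrableOn (fun u => ρ u * Real.log (γ u)) U := by
    rw [hfe]; exact (hgρ.div_const lam).sub (hρint.const_mul _)
  have hval2 : (∫ u in U, ρ u * Real.log (γ u))
      = (∫ u in U, g u * ρ u) / lam - Real.log Z := by
    rw [hfe, integral_sub ((hgρ.div_const lam)) (hρint.const_mul _), integral_div,
      integral_const_mul _ _, hρ1, mul_one]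
  have hA : IntegrableOn (fun u => ρ u * Real.log (ρ u) - ρ u * Real.log (γ u)) U :=
    hρent.sub hint2
  have hB : IntegrableOn (fun u => ρ u - γ u) U := hρint.sub hγint
  have hhint : IntegrableOn (fun u => ρ u * Real.log (ρ u) - ρ u * Real.log (γ u) - (ρ u - γ u)) U :=
    hA.sub hB
  have hh0 : ∀ u ∈ U, 0 ≤ ρ u * Real.log (ρ u) - ρ u * Real.log (γ u) - (ρ u - γ u) :=
    fun u hu => by have := key_pt (hγpos u) (hρ0 u hu); linarith
  have hinth : (∫ u in U, (ρ u * Real.log (ρ u) - ρ u * Real.log (γ u) - (ρ u - γ u)))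
      = (∫ u in U, ρ u * Real.log (ρ u)) - ((∫ u in U, g u * ρ u) / lam - Real.log Z) := by
    rw [integral_sub hA hB, integral_sub hρent hint2, integral_sub hρint hγint, hρ1, hγ1,
      hval2]
    ring
  have hnn : 0 ≤ ∫ u in U, (ρ u * Real.log (ρ u) - ρ u * Real.log (γ u) - (ρ u - γ u)) :=
    setIntegral_nonneg hUmeas hh0
  have hkey : lam * ∫ u in U, (ρ u * Real.log (ρ u) - ρ u * Real.log (γ u) - (ρ u - γ u))
      = lam * (∫ u in U, ρ u * Real.log (ρ u)) - (∫ u in U, g u * ρ u)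
        + lam * Real.log Z := by
    rw [hinth]
    field_simp
    ring
  constructor
  · nlinarith [mul_nonneg hlam.le hnn]
  · intro heq
    have hz : (∫ u in U, (ρ u * Real.log (ρ u) - ρ u * Real.log (γ u) - (ρ u - γ u))) = 0 := by
      have : lam * ∫ u in U, (ρ u * Real.log (ρ u) - ρ u * Real.log (γ u) - (ρ u - γ u)) = 0 := by
        rw [hkey]; linarith
      exact (mul_eq_zero.1 this).resolve_left hlam.ne'
    have hae0 : ∀ᵐ u ∂(volume.restrict U),
        0 ≤ ρ u * Real.log (ρ u) - ρ u * Real.log (γ u) - (ρ u - γ u) := by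
      rw [ae_restrict_iff' hUmeas]; filter_upwards with u hu using hh0 u hu
    have := (integral_eq_zero_iff_of_nonneg_ae hae0 hhint).1 hz
    filter_upwards [this, ae_restrict_mem hUmeas] with u h1 h2
    have h1' : ρ u * Real.log (ρ u) - ρ u * Real.log (γ u) = ρ u - γ u := by
      have h1'' : ρ u * Real.log (ρ u) - ρ u * Real.log (γ u) - (ρ u - γ u) = 0 := h1
      linarith
    exact key_pt_eq (hγpos u) (hρ0 u h2) h1'

lemma gibbs_value (hUmeas : MeasurableSet U) (hUfin : volume U ≠ ⊤) (hUpos : 0 < volume U)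
    (hg : Measurable g) (hM : ∀ u ∈ U, |g u| ≤ M) (hlam : 0 < lam) :
    (∫ u in U, g u * (Real.exp (g u / lam) / ∫ v in U, Real.exp (g v / lam)))
      - lam * ∫ u in U, (Real.exp (g u / lam) / ∫ v in U, Real.exp (g v / lam))
          * Real.log (Real.exp (g u / lam) / ∫ v in U, Real.exp (g v / lam))
      = lam * Real.log (∫ u in U, Real.exp (g u / lam)) := by
  set Z : ℝ := ∫ u in U, Real.exp (g u / lam) with hZ
  have hZpos : 0 < Z := Zpos hUmeas hUfin hUpos hg hM hlam
  set γ : α → ℝ := fun u => Real.exp (g u / lam) / Z with hγ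
  have hlogγ : ∀ u, Real.log (γ u) = g u / lam - Real.log Z := fun u => by
    rw [hγ, Real.log_div (Real.exp_ne_zero _) hZpos.ne', Real.log_exp]
  have hγint : IntegrableOn γ U := (expInt hUmeas hUfin hg hM hlam).div_const Z
  have hγ1 : (∫ u in U, γ u) = 1 := by
    simp only [hγ, integral_div]; exact div_self hZpos.ne'
  have hgγ : IntegrableOn (fun u => g u * γ u) U := by
    refine integrableOn_of_bdd hUmeas hUfin ((hg.mul ((hg.div_const lam).exp.div_const Z)).aestronglyMeasurable) (C := M * (Real.exp (M / lam) / Z)) ?_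
    intro u hu
    rw [abs_mul]
    refine mul_le_mul (hM u hu) ?_ (abs_nonneg _) ((abs_nonneg _).trans (hM u hu))
    rw [abs_of_pos (div_pos (Real.exp_pos _) hZpos)]
    gcongr
    exact (abs_le.1 (hM u hu)).2
  have hfe : (fun u => γ u * Real.log (γ u))
      = fun u => (g u * γ u) / lam - Real.log Z * γ u := funext fun u => by
    rw [hlogγ]; ring
  have : (∫ u in U, γ u * Real.log (γ u))
      = (∫ u in U, g u * γ u) / lam - Real.log Z := by
    rw [hfe, integral_sub (hgγ.div_const lam) (hγint.const_mul _), integral_div,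
      integral_const_mul _ _, hγ1, mul_one]
  rw [show (∫ u in U, g u * (Real.exp (g u / lam) / ∫ v in U, Real.exp (g v / lam)))
      = ∫ u in U, g u * γ u from rfl] at *
  rw [show (∫ u in U, (Real.exp (g u / lam) / ∫ v in U, Real.exp (g v / lam))
          * Real.log (Real.exp (g u / lam) / ∫ v in U, Real.exp (g v / lam)))
      = ∫ u in U, γ u * Real.log (γ u) from rfl, this]
  field_simp
  ring

lemma log_bound_of_mem_Icc {x lo hi : ℝ} (hlo : 0 < lo) (h1 : lo ≤ x) (h2 : x ≤ hi) :
    |Real.log x| ≤ |Real.log lo| + |Real.log hi| := by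
  have hx : 0 < x := hlo.trans_le h1
  rw [abs_le]
  constructor
  · have := Real.log_le_log hlo h1
    have h3 : -|Real.log lo| ≤ Real.log lo := neg_abs_le _
    have h4 : (0:ℝ) ≤ |Real.log hi| := abs_nonneg _
    linarith
  · have := Real.log_le_log hx h2
    have h3 : Real.log hi ≤ |Real.log hi| := le_abs_self _
    have h4 : (0:ℝ) ≤ |Real.log lo| := abs_nonneg _
    linarith

lemma gibbs_ent_int (hUmeas : MeasurableSet U) (hUfin : volume U ≠ ⊤) (hUpos : 0 < volume U)
    (hg : Measurable g) (hM : ∀ u ∈ U, |g u| ≤ M) (hlam : 0 < lam) :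
    IntegrableOn (fun u => (Real.exp (g u / lam) / ∫ v in U, Real.exp (g v / lam))
      * Real.log (Real.exp (g u / lam) / ∫ v in U, Real.exp (g v / lam))) U := by
  set Z : ℝ := ∫ u in U, Real.exp (g u / lam) with hZ
  have hZpos : 0 < Z := Zpos hUmeas hUfin hUpos hg hM hlam
  set lo : ℝ := Real.exp (-M / lam) / Z with hlo
  set hi : ℝ := Real.exp (M / lam) / Z with hhi
  have hlopos : 0 < lo := div_pos (Real.exp_pos _) hZpos
  have hbd : ∀ u ∈ U, lo ≤ Real.exp (g u / lam) / Z ∧ Real.exp (g u / lam) / Z ≤ hi := by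
    intro u hu
    have hgu := abs_le.1 (hM u hu)
    constructor
    · exact (div_le_div_iff_of_pos_right hZpos).2 (Real.exp_le_exp.2 (by gcongr; exact hgu.1))
    · exact (div_le_div_iff_of_pos_right hZpos).2 (Real.exp_le_exp.2 (by gcongr; exact hgu.2))
  refine integrableOn_of_bdd hUmeas hUfin ?_
    (C := hi * (|Real.log lo| + |Real.log hi|)) ?_
  · exact (((hg.div_const lam).exp.div_const Z).mul
      ((hg.div_const lam).exp.div_const Z).log).aestronglyMeasurable
  · intro u hu
    obtain ⟨h1, h2⟩ := hbd u hu
    rw [abs_mul, abs_of_pos (div_pos (Real.exp_pos _) hZpos)]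
    exact mul_le_mul h2 (log_bound_of_mem_Icc hlopos h1 h2)
      (abs_nonneg _) (hlopos.le.trans (h1.trans h2))

end Gibbs

lemma stoch_mulVec_bound {d : ℕ} {P : Matrix (Fin d) (Fin d) ℝ}
    (h0 : ∀ i j, 0 ≤ P i j) (h1 : ∀ i, ∑ j, P i j = 1) {v : Fin d → ℝ} {c : ℝ}
    (hv : ∀ j, |v j| ≤ c) (i : Fin d) : |P.mulVec v i| ≤ c := by
  have : P.mulVec v i = ∑ j, P i j * v j := by
    simp [Matrix.mulVec, dotProduct]
  rw [this]
  calc |∑ j, P i j * v j| ≤ ∑ j, |P i j * v j| := Finset.abs_sum_le_sum_abs _ _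
    _ ≤ ∑ j, P i j * c := by
        refine Finset.sum_le_sum fun j _ => ?_
        rw [abs_mul, abs_of_nonneg (h0 i j)]
        exact mul_le_mul_of_nonneg_left (hv j) (h0 i j)
    _ = c := by rw [← Finset.sum_mul, h1 i, one_mul]

lemma stoch_pow_mulVec_bound {d : ℕ} {P : Matrix (Fin d) (Fin d) ℝ}
    (h0 : ∀ i j, 0 ≤ P i j) (h1 : ∀ i, ∑ j, P i j = 1) {c : ℝ} :
    ∀ (k : ℕ) (v : Fin d → ℝ), (∀ j, |v j| ≤ c) → ∀ i, |(P ^ k).mulVec v i| ≤ c := by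
  intro k
  induction k with
  | zero => intro v hv i; simpa [Matrix.one_mulVec] using hv i
  | succ k ih =>
    intro v hv i
    rw [pow_succ, ← Matrix.mulVec_mulVec]
    exact ih _ (fun j => stoch_mulVec_bound h0 h1 hv j) i

lemma density_integrable {α : Type*} [MeasureSpace α] {U : Set α} {ρ : α → ℝ}
    (h : (∫ u in U, ρ u) = 1) : IntegrableOn ρ U := by
  by_contra hc
  rw [MeasureTheory.integral_undef hc] at h; norm_num at h

lemma mul_density_int {α : Type*} [MeasureSpace α] {U : Set α} (hUmeas : MeasurableSet U)
    {q ρ : α → ℝ} (hq : AEStronglyMeasurable (fun u => q u * ρ u) (volume.restrict U))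
    {C : ℝ} (hC : ∀ u ∈ U, |q u| ≤ C) (hρ0 : ∀ u ∈ U, 0 ≤ ρ u)
    (hρint : IntegrableOn ρ U) : IntegrableOn (fun u => q u * ρ u) U := by
  refine Integrable.mono' (hρint.const_mul C) hq ?_
  rw [ae_restrict_iff' hUmeas]
  filter_upwards with u hu
  rw [Real.norm_eq_abs, abs_mul, abs_of_nonneg (hρ0 u hu)]
  exact mul_le_mul_of_nonneg_right (hC u hu) (hρ0 u hu)

lemma abs_setIntegral_mul_density {α : Type*} [MeasureSpace α] {U : Set α}
    (hUmeas : MeasurableSet U)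
    {q ρ : α → ℝ} (hq : AEStronglyMeasurable (fun u => q u * ρ u) (volume.restrict U))
    {C : ℝ} (hC : ∀ u ∈ U, |q u| ≤ C) (hρ0 : ∀ u ∈ U, 0 ≤ ρ u)
    (hρ1 : (∫ u in U, ρ u) = 1) : |∫ u in U, q u * ρ u| ≤ C := by
  have hρint := density_integrable hρ1
  have hint := mul_density_int hUmeas hq hC hρ0 hρint
  calc |∫ u in U, q u * ρ u| ≤ ∫ u in U, |q u * ρ u| := by
        simpa [Real.norm_eq_abs, abs_mul] using
          norm_integral_le_integral_norm (μ := volume.restrict U) (fun u => q u * ρ u)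
    _ = ∫ u in U, |q u| * |ρ u| := by simp_rw [abs_mul]
    _ ≤ ∫ u in U, C * ρ u := by
        refine integral_mono_ae (hint.abs.congr (Filter.EventuallyEq.of_eq (funext fun u => abs_mul _ _))) (hρint.const_mul C) ?_
        refine (ae_restrict_iff' hUmeas).2 ?_
        filter_upwards with u hu
        rw [abs_of_nonneg (hρ0 u hu)]
        exact mul_le_mul_of_nonneg_right (hC u hu) (hρ0 u hu)
    _ = C := by rw [integral_const_mul _ _, hρ1, mul_one]

noncomputable section

variable (ℓ d : ℕ) (U : Set (EuclideanSpace ℝ (Fin ℓ)))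
  (f : ℕ → Fin d → EuclideanSpace ℝ (Fin ℓ) → ℝ)
  (p : EuclideanSpace ℝ (Fin ℓ) → Fin d → Fin d → ℝ)
  (dis : ℕ → ℝ) (lam : ℝ)
variable (ℓ d : ℕ) (U : Set (EuclideanSpace ℝ (Fin ℓ)))
  (f : ℕ → Fin d → EuclideanSpace ℝ (Fin ℓ) → ℝ)
  (p : EuclideanSpace ℝ (Fin ℓ) → Fin d → Fin d → ℝ)
  (dis : ℕ → ℝ) (lam : ℝ)

/-- Shannon differential entropy of a density on `U`. -/
def Hent (ρ : EuclideanSpace ℝ (Fin ℓ) → ℝ) : ℝ := -∫ u in U, ρ u * Real.log (ρ u)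

/-- Transition matrix induced by a relaxed (density-valued) feedback control `pol`. -/
def Pmat (pol : Fin d → EuclideanSpace ℝ (Fin ℓ) → ℝ) : Matrix (Fin d) (Fin d) ℝ :=
  Matrix.of fun i j => ∫ u in U, p u i j * pol i u

/-- Entropy-regularized running reward, at "time-difference" `k`, of control `pol`. -/
def rvec (pol : Fin d → EuclideanSpace ℝ (Fin ℓ) → ℝ) (k : ℕ) : Fin d → ℝ :=
  fun i => (∫ u in U, f k i u * pol i u) + lam * dis k * Hent ℓ U (pol i)

/-- The entropy-regularized value `J_λ^pol(i) = E_i[Σ_k (f^{pol}(k,X_k) + λδ(k)H(pol(X_k)))]`. -/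
def Jlam (pol : Fin d → EuclideanSpace ℝ (Fin ℓ) → ℝ) : Fin d → ℝ :=
  ∑' k : ℕ, ((Pmat ℓ d U p pol) ^ k).mulVec (rvec ℓ d U f dis lam pol k)

/-- The auxiliary continuation value `V_λ^pol(i)`, with rewards shifted by one time step. -/
def Vlam (pol : Fin d → EuclideanSpace ℝ (Fin ℓ) → ℝ) : Fin d → ℝ :=
  ∑' k : ℕ, ((Pmat ℓ d U p pol) ^ k).mulVec (rvec ℓ d U f dis lam pol (k + 1))

/-- The value `J_λ^{pol'⊗₁pol}` of the concatenation of `pol'` (at time 0) and `pol` (from time 1 on). -/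
def Jcat (pol' pol : Fin d → EuclideanSpace ℝ (Fin ℓ) → ℝ) : Fin d → ℝ :=
  fun i => rvec ℓ d U f dis lam pol' 0 i + (Pmat ℓ d U p pol').mulVec (Vlam ℓ d U f p dis lam pol) i

/-- `pol` is a regular relaxed feedback control: each `pol i` is a probability density on `U`
with finite differential entropy. -/
def IsRegularControl (pol : Fin d → EuclideanSpace ℝ (Fin ℓ) → ℝ) : Prop :=
  ∀ i, Measurable (pol i) ∧ (∀ u ∈ U, 0 ≤ pol i u) ∧ (∀ u, u ∉ U → pol i u = 0) ∧
    (∫ u in U, pol i u) = 1 ∧ IntegrableOn (fun u => pol i u * Real.log (pol i u)) U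

/-- `pol` is a relaxed equilibrium for the entropy-regularized MDP:
`J_λ^{pol'⊗₁pol}(i) ≤ J_λ^pol(i)` for all regular `pol'` and all states `i`. -/
def IsRelaxedEquilibrium (pol : Fin d → EuclideanSpace ℝ (Fin ℓ) → ℝ) : Prop :=
  IsRegularControl ℓ d U pol ∧
  ∀ pol', IsRegularControl ℓ d U pol' → ∀ i, Jcat ℓ d U f p dis lam pol' pol i ≤ Jlam ℓ d U f p dis lam pol i


/-- The Gibbs relaxed control `Γ_λ(y, i)(u) = e^{(f(0,i,u)+p^u_i·y)/λ}/∫_U e^{(f(0,i,v)+p^v_i·y)/λ} dv`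
induced by a vector `y ∈ ℝ^d` (extended by `0` off `U`). -/
def gibbsPol (y : Fin d → ℝ) : Fin d → EuclideanSpace ℝ (Fin ℓ) → ℝ :=
  fun i => U.indicator fun u =>
    Real.exp ((f 0 i u + ∑ j, p u i j * y j) / lam)
      / ∫ v in U, Real.exp ((f 0 i v + ∑ j, p v i j * y j) / lam)


lemma p_le_one (hstoch : ∀ u ∈ U, ∀ i, (∀ j, 0 ≤ p u i j) ∧ (∑ j, p u i j) = 1)
    {u : EuclideanSpace ℝ (Fin ℓ)} (hu : u ∈ U) (i j : Fin d) : p u i j ≤ 1 := by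
  obtain ⟨h0, h1⟩ := hstoch u hu i
  calc p u i j ≤ ∑ j', p u i j' :=
        Finset.single_le_sum (fun j' _ => h0 j') (Finset.mem_univ j)
    _ = 1 := h1

lemma pol_int {pol : Fin d → EuclideanSpace ℝ (Fin ℓ) → ℝ}
    (hpol : IsRegularControl ℓ d U pol) (i : Fin d) : IntegrableOn (pol i) U :=
  density_integrable (hpol i).2.2.2.1

lemma p_pol_int (hUmeas : MeasurableSet U)
    (hpmeas : ∀ i j, Measurable (fun u => p u i j))
    (hstoch : ∀ u ∈ U, ∀ i, (∀ j, 0 ≤ p u i j) ∧ (∑ j, p u i j) = 1)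
    {pol : Fin d → EuclideanSpace ℝ (Fin ℓ) → ℝ}
    (hpol : IsRegularControl ℓ d U pol) (i j : Fin d) :
    IntegrableOn (fun u => p u i j * pol i u) U := by
  refine mul_density_int hUmeas ((hpmeas i j).mul (hpol i).1).aestronglyMeasurable
    (C := 1) ?_ (hpol i).2.1 (pol_int ℓ d U hpol i)
  intro u hu
  rw [abs_of_nonneg ((hstoch u hu i).1 j)]
  exact p_le_one ℓ d U p hstoch hu i j

lemma Pmat_nonneg (hUmeas : MeasurableSet U)
    (hstoch : ∀ u ∈ U, ∀ i, (∀ j, 0 ≤ p u i j) ∧ (∑ j, p u i j) = 1)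
    {pol : Fin d → EuclideanSpace ℝ (Fin ℓ) → ℝ}
    (hpol : IsRegularControl ℓ d U pol) (i j : Fin d) :
    0 ≤ Pmat ℓ d U p pol i j :=
  setIntegral_nonneg hUmeas fun u hu =>
    mul_nonneg ((hstoch u hu i).1 j) ((hpol i).2.1 u hu)

lemma Pmat_rowsum (hUmeas : MeasurableSet U)
    (hpmeas : ∀ i j, Measurable (fun u => p u i j))
    (hstoch : ∀ u ∈ U, ∀ i, (∀ j, 0 ≤ p u i j) ∧ (∑ j, p u i j) = 1)
    {pol : Fin d → EuclideanSpace ℝ (Fin ℓ) → ℝ}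
    (hpol : IsRegularControl ℓ d U pol) (i : Fin d) :
    ∑ j, Pmat ℓ d U p pol i j = 1 := by
  have h1 : ∑ j, Pmat ℓ d U p pol i j
      = ∫ u in U, ∑ j, p u i j * pol i u := by
    rw [show (∑ j, Pmat ℓ d U p pol i j) = ∑ j, ∫ u in U, p u i j * pol i u from rfl,
      ← integral_finset_sum _ (fun j _ => p_pol_int ℓ d U p hUmeas hpmeas hstoch hpol i j)]
  rw [h1, setIntegral_congr_fun hUmeas (g := pol i) fun u hu => by
    rw [← Finset.sum_mul, (hstoch u hu i).2, one_mul]]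
  exact (hpol i).2.2.2.1

lemma rvec_abs_le (hUmeas : MeasurableSet U)
    (hfmeas : ∀ t i, Measurable (f t i))
    (b : ℕ → ℝ) (hb : ∀ t i, ∀ u ∈ U, |f t i u| ≤ b t)
    (hdis : ∀ t, dis t ∈ Set.Icc (0:ℝ) 1) (hlam : 0 < lam)
    {pol : Fin d → EuclideanSpace ℝ (Fin ℓ) → ℝ}
    (hpol : IsRegularControl ℓ d U pol) (k : ℕ) (i : Fin d) :
    |rvec ℓ d U f dis lam pol k i| ≤ b k + lam * dis k * ∑ i', |Hent ℓ U (pol i')| := by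
  have h1 : |∫ u in U, f k i u * pol i u| ≤ b k :=
    abs_setIntegral_mul_density hUmeas ((hfmeas k i).mul (hpol i).1).aestronglyMeasurable
      (hb k i) (hpol i).2.1 (hpol i).2.2.2.1
  have h2 : |Hent ℓ U (pol i)| ≤ ∑ i', |Hent ℓ U (pol i')| :=
    Finset.single_le_sum (f := fun i' => |Hent ℓ U (pol i')|) (fun i' _ => abs_nonneg _) (Finset.mem_univ i)
  have h3 : |lam * dis k * Hent ℓ U (pol i)| = lam * dis k * |Hent ℓ U (pol i)| := by
    rw [abs_mul, abs_of_nonneg (mul_nonneg hlam.le (hdis k).1)]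
  calc |rvec ℓ d U f dis lam pol k i|
      ≤ |∫ u in U, f k i u * pol i u| + |lam * dis k * Hent ℓ U (pol i)| := abs_add_le _ _
    _ ≤ b k + lam * dis k * ∑ i', |Hent ℓ U (pol i')| := by
        rw [h3]
        exact add_le_add h1 (mul_le_mul_of_nonneg_left h2 (mul_nonneg hlam.le (hdis k).1))

lemma summable_terms (hUmeas : MeasurableSet U)
    (hfmeas : ∀ t i, Measurable (f t i))
    (hpmeas : ∀ i j, Measurable (fun u => p u i j))
    (hstoch : ∀ u ∈ U, ∀ i, (∀ j, 0 ≤ p u i j) ∧ (∑ j, p u i j) = 1)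
    (b : ℕ → ℝ) (hb : ∀ t i, ∀ u ∈ U, |f t i u| ≤ b t) (hbsum : Summable b)
    (hdis : ∀ t, dis t ∈ Set.Icc (0:ℝ) 1) (hdissum : Summable dis) (hlam : 0 < lam)
    {pol : Fin d → EuclideanSpace ℝ (Fin ℓ) → ℝ}
    (hpol : IsRegularControl ℓ d U pol) (s : ℕ) :
    Summable (fun k => ((Pmat ℓ d U p pol) ^ k).mulVec (rvec ℓ d U f dis lam pol (k + s))) := by
  set C : ℝ := ∑ i', |Hent ℓ U (pol i')| with hC
  have hcsum : Summable (fun k => b k + lam * dis k * C) := by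
    refine hbsum.add ?_
    have : (fun k => lam * dis k * C) = fun k => (lam * C) * dis k := by
      funext k; ring
    rw [this]
    exact hdissum.mul_left _
  rw [Pi.summable]
  intro i
  refine Summable.of_norm_bounded (g := fun k => b (k + s) + lam * dis (k + s) * C)
    ((summable_nat_add_iff s).2 hcsum) fun k => ?_
  rw [Real.norm_eq_abs]
  exact stoch_pow_mulVec_bound (Pmat_nonneg ℓ d U p hUmeas hstoch hpol)
    (Pmat_rowsum ℓ d U p hUmeas hpmeas hstoch hpol) k _
    (fun j => rvec_abs_le ℓ d U f dis lam hUmeas hfmeas b hb hdis hlam hpol (k + s) j) i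

lemma Jlam_eq_Jcat (hUmeas : MeasurableSet U)
    (hfmeas : ∀ t i, Measurable (f t i))
    (hpmeas : ∀ i j, Measurable (fun u => p u i j))
    (hstoch : ∀ u ∈ U, ∀ i, (∀ j, 0 ≤ p u i j) ∧ (∑ j, p u i j) = 1)
    (b : ℕ → ℝ) (hb : ∀ t i, ∀ u ∈ U, |f t i u| ≤ b t) (hbsum : Summable b)
    (hdis : ∀ t, dis t ∈ Set.Icc (0:ℝ) 1) (hdissum : Summable dis) (hlam : 0 < lam)
    {pol : Fin d → EuclideanSpace ℝ (Fin ℓ) → ℝ}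
    (hpol : IsRegularControl ℓ d U pol) :
    Jlam ℓ d U f p dis lam pol = Jcat ℓ d U f p dis lam pol pol := by
  have hS := summable_terms ℓ d U f p dis lam hUmeas hfmeas hpmeas hstoch b hb hbsum
    hdis hdissum hlam hpol 0
  have hS1 := summable_terms ℓ d U f p dis lam hUmeas hfmeas hpmeas hstoch b hb hbsum
    hdis hdissum hlam hpol 1
  simp only [add_zero] at hS
  set P := Pmat ℓ d U p pol with hP
  set L : (Fin d → ℝ) →L[ℝ] (Fin d → ℝ) :=
    LinearMap.toContinuousLinearMap (Matrix.mulVecLin P) with hL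
  have hLapp : ∀ v, L v = P.mulVec v := fun v => rfl
  have h0 : Jlam ℓ d U f p dis lam pol
      = rvec ℓ d U f dis lam pol 0
        + ∑' k, (P ^ (k + 1)).mulVec (rvec ℓ d U f dis lam pol (k + 1)) := by
    rw [Jlam, Summable.tsum_eq_zero_add hS, pow_zero, Matrix.one_mulVec]
  have h1 : (∑' k, (P ^ (k + 1)).mulVec (rvec ℓ d U f dis lam pol (k + 1)))
      = P.mulVec (Vlam ℓ d U f p dis lam pol) := by
    have he : ∀ k, (P ^ (k + 1)).mulVec (rvec ℓ d U f dis lam pol (k + 1))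
        = L ((P ^ k).mulVec (rvec ℓ d U f dis lam pol (k + 1))) := by
      intro k
      rw [hLapp, Matrix.mulVec_mulVec, ← pow_succ']
    rw [tsum_congr he, ← L.map_tsum hS1, hLapp, Vlam]
  rw [h0, h1]
  funext i
  simp [Jcat, hP]

lemma Jcat_formula (hUmeas : MeasurableSet U)
    (hfmeas : ∀ t i, Measurable (f t i))
    (hpmeas : ∀ i j, Measurable (fun u => p u i j))
    (hstoch : ∀ u ∈ U, ∀ i, (∀ j, 0 ≤ p u i j) ∧ (∑ j, p u i j) = 1)
    (b : ℕ → ℝ) (hb : ∀ t i, ∀ u ∈ U, |f t i u| ≤ b t)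
    (hdis0 : dis 0 = 1)
    {pol' pol : Fin d → EuclideanSpace ℝ (Fin ℓ) → ℝ}
    (hpol' : IsRegularControl ℓ d U pol') (i : Fin d) :
    Jcat ℓ d U f p dis lam pol' pol i
      = (∫ u in U, (f 0 i u + ∑ j, p u i j * Vlam ℓ d U f p dis lam pol j) * pol' i u)
        + lam * Hent ℓ U (pol' i) := by
  set v := Vlam ℓ d U f p dis lam pol with hv
  have hint1 : IntegrableOn (fun u => f 0 i u * pol' i u) U :=
    mul_density_int hUmeas ((hfmeas 0 i).mul (hpol' i).1).aestronglyMeasurable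
      (hb 0 i) (hpol' i).2.1 (pol_int ℓ d U hpol' i)
  have hintp : ∀ j, IntegrableOn (fun u => p u i j * pol' i u * v j) U := fun j =>
    (p_pol_int ℓ d U p hUmeas hpmeas hstoch hpol' i j).mul_const _
  have hint2 : IntegrableOn (fun u => (∑ j, p u i j * v j) * pol' i u) U := by
    have : (fun u => (∑ j, p u i j * v j) * pol' i u)
        = fun u => ∑ j, p u i j * pol' i u * v j := by
      funext u
      rw [Finset.sum_mul]
      exact Finset.sum_congr rfl fun j _ => by ring
    rw [this]
    exact integrable_finset_sum _ fun j _ => hintp j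
  have hmv : (Pmat ℓ d U p pol').mulVec v i
      = ∫ u in U, (∑ j, p u i j * v j) * pol' i u := by
    have e1 : (Pmat ℓ d U p pol').mulVec v i
        = ∑ j, (∫ u in U, p u i j * pol' i u) * v j := by
      simp [Pmat, Matrix.mulVec, dotProduct]
    have e2 : ∀ j, (∫ u in U, p u i j * pol' i u) * v j
        = ∫ u in U, p u i j * pol' i u * v j := fun j =>
      (integral_mul_const _ _).symm
    rw [e1]
    simp_rw [e2]
    rw [← integral_finset_sum _ fun j _ => hintp j]
    refine setIntegral_congr_fun hUmeas fun u hu => ?_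
    rw [Finset.sum_mul]
    exact Finset.sum_congr rfl fun j _ => by ring
  have hsplit : (∫ u in U, (f 0 i u + ∑ j, p u i j * v j) * pol' i u)
      = (∫ u in U, f 0 i u * pol' i u) + ∫ u in U, (∑ j, p u i j * v j) * pol' i u := by
    rw [← integral_add hint1 hint2]
    refine setIntegral_congr_fun hUmeas fun u hu => ?_
    ring
  rw [Jcat, rvec, hmv, hsplit, hdis0]
  ring

lemma gfun_meas (hfmeas : ∀ t i, Measurable (f t i))
    (hpmeas : ∀ i j, Measurable (fun u => p u i j)) (v : Fin d → ℝ) (i : Fin d) :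
    Measurable (fun u => f 0 i u + ∑ j, p u i j * v j) :=
  (hfmeas 0 i).add (Finset.measurable_sum _ fun j _ => (hpmeas i j).mul_const _)

lemma gfun_bound (hstoch : ∀ u ∈ U, ∀ i, (∀ j, 0 ≤ p u i j) ∧ (∑ j, p u i j) = 1)
    (b : ℕ → ℝ) (hb : ∀ t i, ∀ u ∈ U, |f t i u| ≤ b t) (v : Fin d → ℝ) (i : Fin d) :
    ∀ u ∈ U, |f 0 i u + ∑ j, p u i j * v j| ≤ b 0 + ∑ j, |v j| := by
  intro u hu
  calc |f 0 i u + ∑ j, p u i j * v j| ≤ |f 0 i u| + |∑ j, p u i j * v j| := abs_add_le _ _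
    _ ≤ b 0 + ∑ j, |v j| := by
        refine add_le_add (hb 0 i u hu) ?_
        calc |∑ j, p u i j * v j| ≤ ∑ j, |p u i j * v j| := Finset.abs_sum_le_sum_abs _ _
          _ ≤ ∑ j, |v j| := by
              refine Finset.sum_le_sum fun j _ => ?_
              rw [abs_mul, abs_of_nonneg ((hstoch u hu i).1 j)]
              calc p u i j * |v j| ≤ 1 * |v j| :=
                    mul_le_mul_of_nonneg_right (p_le_one ℓ d U p hstoch hu i j) (abs_nonneg _)
                _ = |v j| := one_mul _

lemma gibbsPol_regular (hUmeas : MeasurableSet U) (hUc : IsCompact U) (hUpos : 0 < volume U)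
    (hfmeas : ∀ t i, Measurable (f t i))
    (hpmeas : ∀ i j, Measurable (fun u => p u i j))
    (hstoch : ∀ u ∈ U, ∀ i, (∀ j, 0 ≤ p u i j) ∧ (∑ j, p u i j) = 1)
    (b : ℕ → ℝ) (hb : ∀ t i, ∀ u ∈ U, |f t i u| ≤ b t) (hlam : 0 < lam) (y : Fin d → ℝ) :
    IsRegularControl ℓ d U (gibbsPol ℓ d U f p lam y) := by
  intro i
  have hUfin : volume U ≠ ⊤ := hUc.measure_lt_top.ne
  set g : EuclideanSpace ℝ (Fin ℓ) → ℝ := fun u => f 0 i u + ∑ j, p u i j * y j with hg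
  have hgm : Measurable g := gfun_meas ℓ d f p hfmeas hpmeas y i
  have hgM : ∀ u ∈ U, |g u| ≤ b 0 + ∑ j, |y j| := gfun_bound ℓ d U f p hstoch b hb y i
  have hZpos : 0 < ∫ v in U, Real.exp (g v / lam) :=
    Zpos hUmeas hUfin hUpos hgm hgM hlam
  have hpol_eq : gibbsPol ℓ d U f p lam y i
      = U.indicator fun u => Real.exp (g u / lam) / ∫ v in U, Real.exp (g v / lam) := rfl
  rw [hpol_eq]
  refine ⟨Measurable.indicator ((hgm.div_const lam).exp.div_const _) hUmeas,
    fun u hu => Set.indicator_apply_nonneg fun _ => by positivity,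
    fun u hu => Set.indicator_of_notMem hu _, ?_, ?_⟩
  · rw [setIntegral_congr_fun hUmeas
      (g := fun u => Real.exp (g u / lam) / ∫ v in U, Real.exp (g v / lam))
      (fun u hu => Set.indicator_of_mem hu _), integral_div, div_self hZpos.ne']
  · refine (gibbs_ent_int hUmeas hUfin hUpos hgm hgM hlam).congr ?_
    filter_upwards [ae_restrict_mem hUmeas] with u hu
    rw [Set.indicator_of_mem hu]

lemma Vlam_congr {pol pol' : Fin d → EuclideanSpace ℝ (Fin ℓ) → ℝ}
    (h : ∀ i, pol i =ᵐ[volume.restrict U] pol' i) :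
    Vlam ℓ d U f p dis lam pol = Vlam ℓ d U f p dis lam pol' := by
  have hP : Pmat ℓ d U p pol = Pmat ℓ d U p pol' := by
    ext i j
    have he : (fun u => p u i j * pol i u) =ᵐ[volume.restrict U]
        (fun u => p u i j * pol' i u) := (h i).mono fun u hu => by dsimp; rw [hu]
    exact integral_congr_ae he
  have hH : ∀ i, Hent ℓ U (pol i) = Hent ℓ U (pol' i) := fun i => by
    have he : (fun u => pol i u * Real.log (pol i u)) =ᵐ[volume.restrict U]
        (fun u => pol' i u * Real.log (pol' i u)) := (h i).mono fun u hu => by dsimp; rw [hu]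
    rw [Hent, Hent, integral_congr_ae he]
  have hr : ∀ k, rvec ℓ d U f dis lam pol k = rvec ℓ d U f dis lam pol' k := fun k =>
    funext fun i => by
      have he : (fun u => f k i u * pol i u) =ᵐ[volume.restrict U]
          (fun u => f k i u * pol' i u) := (h i).mono fun u hu => by dsimp; rw [hu]
      rw [rvec, rvec, hH i, integral_congr_ae he]
  rw [Vlam, Vlam, hP]
  exact tsum_congr fun k => by rw [hr]

/-- `y` is a fixed point of `Ψ_λ(y) = V_λ^{Γ_λ(y,·)}` iff `y = V_λ^π` for
some relaxed equilibrium `π` of the entropy-regularized MDP; in that case `Γ_λ(y,·)` is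
such an equilibrium. -/
theorem gibbs_value_fixed_point_iff_equilibrium
    (hUmeas : MeasurableSet U) (hUc : IsCompact U) (hUpos : 0 < volume U)
    (hfmeas : ∀ t i, Measurable (f t i))
    (hpmeas : ∀ i j, Measurable (fun u => p u i j))
    (hstoch : ∀ u ∈ U, ∀ i, (∀ j, 0 ≤ p u i j) ∧ (∑ j, p u i j) = 1)
    (b : ℕ → ℝ) (hb : ∀ t i, ∀ u ∈ U, |f t i u| ≤ b t) (hbsum : Summable b)
    (hdis : ∀ t, dis t ∈ Set.Icc (0:ℝ) 1) (hdis0 : dis 0 = 1) (hdissum : Summable dis)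
    (hlam : 0 < lam) (y : Fin d → ℝ) :
    (Vlam ℓ d U f p dis lam (gibbsPol ℓ d U f p lam y) = y ↔
      ∃ pol, IsRelaxedEquilibrium ℓ d U f p dis lam pol ∧ y = Vlam ℓ d U f p dis lam pol)
    ∧
    (Vlam ℓ d U f p dis lam (gibbsPol ℓ d U f p lam y) = y →
      IsRelaxedEquilibrium ℓ d U f p dis lam (gibbsPol ℓ d U f p lam y)) := by
  have hUfin : volume U ≠ ⊤ := hUc.measure_lt_top.ne
  have hΓreg : IsRegularControl ℓ d U (gibbsPol ℓ d U f p lam y) :=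
    gibbsPol_regular ℓ d U f p lam hUmeas hUc hUpos hfmeas hpmeas hstoch b hb hlam y
  set Γ := gibbsPol ℓ d U f p lam y with hΓ
  have hgm : ∀ i, Measurable (fun u => f 0 i u + ∑ j, p u i j * y j) :=
    gfun_meas ℓ d f p hfmeas hpmeas y
  have hgM : ∀ i, ∀ u ∈ U, |f 0 i u + ∑ j, p u i j * y j| ≤ b 0 + ∑ j, |y j| :=
    gfun_bound ℓ d U f p hstoch b hb y
  have hZpos : ∀ i, 0 < ∫ v in U, Real.exp ((f 0 i v + ∑ j, p v i j * y j) / lam) :=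
    fun i => Zpos hUmeas hUfin hUpos (hgm i) (hgM i) hlam
  -- value bound for any regular control
  have val_le : ∀ (pol' : Fin d → EuclideanSpace ℝ (Fin ℓ) → ℝ),
      IsRegularControl ℓ d U pol' → ∀ i,
      (∫ u in U, (f 0 i u + ∑ j, p u i j * y j) * pol' i u) + lam * Hent ℓ U (pol' i)
        ≤ lam * Real.log (∫ v in U, Real.exp ((f 0 i v + ∑ j, p v i j * y j) / lam)) := by
    intro pol' hpol' i
    have h := (gibbs_core (g := fun u => f 0 i u + ∑ j, p u i j * y j)
      hUmeas hUfin hUpos (hgm i) (hgM i) hlam (pol' i) (hpol' i).1 (hpol' i).2.1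
      (hpol' i).2.2.2.1 (hpol' i).2.2.2.2).1
    rw [Hent]
    linarith
  have val_eq_ae : ∀ (pol' : Fin d → EuclideanSpace ℝ (Fin ℓ) → ℝ),
      IsRegularControl ℓ d U pol' → ∀ i,
      ((∫ u in U, (f 0 i u + ∑ j, p u i j * y j) * pol' i u) + lam * Hent ℓ U (pol' i)
        = lam * Real.log (∫ v in U, Real.exp ((f 0 i v + ∑ j, p v i j * y j) / lam))) →
      pol' i =ᵐ[volume.restrict U] Γ i := by
    intro pol' hpol' i hval
    have h := (gibbs_core (g := fun u => f 0 i u + ∑ j, p u i j * y j)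
      hUmeas hUfin hUpos (hgm i) (hgM i) hlam (pol' i) (hpol' i).1 (hpol' i).2.1
      (hpol' i).2.2.2.1 (hpol' i).2.2.2.2).2
    rw [Hent] at hval
    have h2 := h (by linarith)
    filter_upwards [h2, ae_restrict_mem hUmeas] with u h3 h4
    rw [h3, hΓ, show gibbsPol ℓ d U f p lam y i u
      = U.indicator (fun u => Real.exp ((f 0 i u + ∑ j, p u i j * y j) / lam)
          / ∫ v in U, Real.exp ((f 0 i v + ∑ j, p v i j * y j) / lam)) u from rfl,
      Set.indicator_of_mem h4]
  -- value of the Gibbs policy itself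
  have gibbs_val : ∀ i,
      (∫ u in U, (f 0 i u + ∑ j, p u i j * y j) * Γ i u) + lam * Hent ℓ U (Γ i)
        = lam * Real.log (∫ v in U, Real.exp ((f 0 i v + ∑ j, p v i j * y j) / lam)) := by
    intro i
    have e1 : (∫ u in U, (f 0 i u + ∑ j, p u i j * y j) * Γ i u)
        = ∫ u in U, (f 0 i u + ∑ j, p u i j * y j) *
            (Real.exp ((f 0 i u + ∑ j, p u i j * y j) / lam)
              / ∫ v in U, Real.exp ((f 0 i v + ∑ j, p v i j * y j) / lam)) := by
      refine setIntegral_congr_fun hUmeas fun u hu => ?_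
      rw [hΓ]
      rw [show gibbsPol ℓ d U f p lam y i u
        = U.indicator (fun u => Real.exp ((f 0 i u + ∑ j, p u i j * y j) / lam)
            / ∫ v in U, Real.exp ((f 0 i v + ∑ j, p v i j * y j) / lam)) u from rfl,
        Set.indicator_of_mem hu]
    have e2 : Hent ℓ U (Γ i)
        = -∫ u in U, (Real.exp ((f 0 i u + ∑ j, p u i j * y j) / lam)
              / ∫ v in U, Real.exp ((f 0 i v + ∑ j, p v i j * y j) / lam))
            * Real.log (Real.exp ((f 0 i u + ∑ j, p u i j * y j) / lam)
              / ∫ v in U, Real.exp ((f 0 i v + ∑ j, p v i j * y j) / lam)) := by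
      rw [Hent]
      congr 1
      refine setIntegral_congr_fun hUmeas fun u hu => ?_
      rw [hΓ]
      rw [show gibbsPol ℓ d U f p lam y i u
        = U.indicator (fun u => Real.exp ((f 0 i u + ∑ j, p u i j * y j) / lam)
            / ∫ v in U, Real.exp ((f 0 i v + ∑ j, p v i j * y j) / lam)) u from rfl,
        Set.indicator_of_mem hu]
    have h := gibbs_value (g := fun u => f 0 i u + ∑ j, p u i j * y j)
      hUmeas hUfin hUpos (hgm i) (hgM i) hlam
    rw [e1, e2]
    linarith
  -- forward direction
  have fwd : Vlam ℓ d U f p dis lam Γ = y → IsRelaxedEquilibrium ℓ d U f p dis lam Γ := by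
    intro hfix
    refine ⟨hΓreg, ?_⟩
    intro pol' hpol' i
    rw [Jlam_eq_Jcat ℓ d U f p dis lam hUmeas hfmeas hpmeas hstoch b hb hbsum hdis hdissum
      hlam hΓreg,
      Jcat_formula ℓ d U f p dis lam hUmeas hfmeas hpmeas hstoch b hb hdis0 hpol' i,
      Jcat_formula ℓ d U f p dis lam hUmeas hfmeas hpmeas hstoch b hb hdis0 hΓreg i,
      hfix]
    calc (∫ u in U, (f 0 i u + ∑ j, p u i j * y j) * pol' i u) + lam * Hent ℓ U (pol' i)
        ≤ lam * Real.log (∫ v in U, Real.exp ((f 0 i v + ∑ j, p v i j * y j) / lam)) :=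
          val_le pol' hpol' i
      _ = _ := (gibbs_val i).symm
  -- backward direction
  have bwd : (∃ pol, IsRelaxedEquilibrium ℓ d U f p dis lam pol
      ∧ y = Vlam ℓ d U f p dis lam pol) → Vlam ℓ d U f p dis lam Γ = y := by
    rintro ⟨pol, ⟨hreg, heq⟩, hy⟩
    have key : ∀ i, pol i =ᵐ[volume.restrict U] Γ i := by
      intro i
      have hreg'' : IsRegularControl ℓ d U (Function.update pol i (Γ i)) := by
        intro j
        rcases eq_or_ne j i with rfl | hne
        · rw [Function.update_self]; exact hΓreg j
        · rw [Function.update_of_ne hne]; exact hreg j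
      have h1 := heq (Function.update pol i (Γ i)) hreg'' i
      rw [Jlam_eq_Jcat ℓ d U f p dis lam hUmeas hfmeas hpmeas hstoch b hb hbsum hdis hdissum
        hlam hreg,
        Jcat_formula ℓ d U f p dis lam hUmeas hfmeas hpmeas hstoch b hb hdis0 hreg'' i,
        Jcat_formula ℓ d U f p dis lam hUmeas hfmeas hpmeas hstoch b hb hdis0 hreg i,
        ← hy] at h1
      simp only [Function.update_self] at h1
      have h2 := val_le pol hreg i
      have h3 := gibbs_val i
      exact val_eq_ae pol hreg i (le_antisymm h2 (by linarith))
    calc Vlam ℓ d U f p dis lam Γ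
        = Vlam ℓ d U f p dis lam pol :=
          Vlam_congr ℓ d U f p dis lam fun i => (key i).symm
      _ = y := hy.symm
  exact ⟨⟨fun h => ⟨Γ, fwd h, h.symm⟩, bwd⟩, fwd⟩

end
end

section
/- Suppose the transition probabilities are chosen directly, p^u_i = u with U a convex subset of the probability simplex in ℝ^d, and f(t,i,u) = δ(t)g(i,u) with g(i,·) concave. If π is a relaxed equilibrium for the discrete-time MDP, then the barycenter policy α^π(i) := ∫_U u (π(i))(du) ∈ U satisfies f^{π(i)}(t,i) = f^{α^π(i)}(t,i) for all t and i; in particular, J^{α^π} = J^π and α^π is a standard equilibrium. -/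
open MeasureTheory Real

noncomputable section

variable (ℓ d : ℕ) (U : Set (EuclideanSpace ℝ (Fin ℓ)))
  (f : ℕ → Fin d → EuclideanSpace ℝ (Fin ℓ) → ℝ)
  (p : EuclideanSpace ℝ (Fin ℓ) → Fin d → Fin d → ℝ)

/-- Transition matrix induced by a relaxed (measure-valued) feedback control `pol`. -/
def PmatM (pol : Fin d → Measure (EuclideanSpace ℝ (Fin ℓ))) : Matrix (Fin d) (Fin d) ℝ :=
  Matrix.of fun i j => ∫ u, p u i j ∂(pol i)

/-- Running reward at "time-difference" `k` under `pol`. -/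
def rvecM (pol : Fin d → Measure (EuclideanSpace ℝ (Fin ℓ))) (k : ℕ) : Fin d → ℝ :=
  fun i => ∫ u, f k i u ∂(pol i)

/-- The value `J^pol(i) = E_i[Σ_k f^{pol(X_k)}(k, X_k)]`. -/
def JM (pol : Fin d → Measure (EuclideanSpace ℝ (Fin ℓ))) : Fin d → ℝ :=
  ∑' k : ℕ, ((PmatM ℓ d p pol) ^ k).mulVec (rvecM ℓ d f pol k)

/-- The auxiliary continuation value `V^pol`. -/
def VM (pol : Fin d → Measure (EuclideanSpace ℝ (Fin ℓ))) : Fin d → ℝ :=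
  ∑' k : ℕ, ((PmatM ℓ d p pol) ^ k).mulVec (rvecM ℓ d f pol (k + 1))

/-- The value `J^{pol'⊗₁pol}` of the concatenation of `pol'` (time 0) and `pol` (time ≥ 1). -/
def JcatM (pol' pol : Fin d → Measure (EuclideanSpace ℝ (Fin ℓ))) : Fin d → ℝ :=
  fun i => rvecM ℓ d f pol' 0 i + (PmatM ℓ d p pol').mulVec (VM ℓ d f p pol) i

/-- `pol` is a relaxed feedback control: each `pol i` is a probability measure on `U`. -/
def IsRelaxedControl (pol : Fin d → Measure (EuclideanSpace ℝ (Fin ℓ))) : Prop :=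
  ∀ i, IsProbabilityMeasure (pol i) ∧ pol i Uᶜ = 0

/-- `pol` is a relaxed equilibrium for the (unregularized) discrete-time MDP. -/
def IsRelaxedEquilibriumM (pol : Fin d → Measure (EuclideanSpace ℝ (Fin ℓ))) : Prop :=
  IsRelaxedControl ℓ d U pol ∧
  ∀ pol', IsRelaxedControl ℓ d U pol' →
    ∀ i, JcatM ℓ d f p pol' pol i ≤ JM ℓ d f p pol i

/-- The barycenter `α^pol(i) = ∫_U u (pol i)(du)` of a relaxed control. -/
def bary (d : ℕ) (pol : Fin d → Measure (EuclideanSpace ℝ (Fin d))) (i : Fin d) :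
    EuclideanSpace ℝ (Fin d) :=
  WithLp.toLp 2 (fun j => ∫ u, u j ∂(pol i))

/-- when transition probabilities are chosen directly (`p^u_i = u`, `U` a
convex subset of the probability simplex) and `f(t,i,u) = δ(t) g(i,u)` with `g(i,·)`
concave, the barycenter `α^pol` of any relaxed equilibrium `pol` is a standard
equilibrium with the same reward and the same value `J`. -/
theorem barycenter_of_relaxed_equilibrium_is_standard
    (d : ℕ) (U : Set (EuclideanSpace ℝ (Fin d)))
    (hUsub : U ⊆ {y : EuclideanSpace ℝ (Fin d) | (∀ j, 0 ≤ y j) ∧ (∑ j, y j) = 1})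
    (hUconv : Convex ℝ U) (hUc : IsCompact U) (hUne : U.Nonempty)
    (g : Fin d → EuclideanSpace ℝ (Fin d) → ℝ)
    (hgcont : ∀ i, Continuous (g i)) (hgconc : ∀ i, ConcaveOn ℝ U (g i))
    (dis : ℕ → ℝ) (hdis0 : dis 0 = 1) (hdis : ∀ t, dis t ∈ Set.Icc (0:ℝ) 1)
    (hdisanti : Antitone dis) (hdissum : Summable dis)
    (pol : Fin d → Measure (EuclideanSpace ℝ (Fin d)))
    (hpol : IsRelaxedEquilibriumM d d U (fun t i u => dis t * g i u) (fun u _ j => u j) pol) :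
    (∀ i, bary d pol i ∈ U) ∧
    (∀ t i, (∫ u, dis t * g i u ∂(pol i)) = dis t * g i (bary d pol i)) ∧
    JM d d (fun t i u => dis t * g i u) (fun u _ j => u j)
        (fun i => Measure.dirac (bary d pol i))
      = JM d d (fun t i u => dis t * g i u) (fun u _ j => u j) pol ∧
    IsRelaxedEquilibriumM d d U (fun t i u => dis t * g i u) (fun u _ j => u j)
      (fun i => Measure.dirac (bary d pol i)) := by
  classical
  obtain ⟨hctl, hopt⟩ := hpol
  have hprob : ∀ i, IsProbabilityMeasure (pol i) := fun i => (hctl i).1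
  have haeU : ∀ i, ∀ᵐ u ∂pol i, u ∈ U := by
    intro i
    rw [ae_iff]
    simpa [Set.compl_def] using (hctl i).2
  have hUclosed : IsClosed U := hUc.isClosed
  have hIntC : ∀ (i : Fin d) (φ : EuclideanSpace ℝ (Fin d) → ℝ), Continuous φ →
      Integrable φ (pol i) := by
    intro i φ hφ
    haveI := hprob i
    obtain ⟨C, hC⟩ := hUc.exists_bound_of_continuousOn hφ.continuousOn
    exact (integrable_const C).mono' hφ.aestronglyMeasurable
      ((haeU i).mono fun u hu => hC u hu)
  have hIntId : ∀ i, Integrable (fun u : EuclideanSpace ℝ (Fin d) => u) (pol i) := by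
    intro i
    haveI := hprob i
    obtain ⟨C, hC⟩ := hUc.exists_bound_of_continuousOn continuous_id.continuousOn
    exact (integrable_const C).mono' continuous_id.aestronglyMeasurable
      ((haeU i).mono fun u hu => hC u hu)
  have hcoord : ∀ j : Fin d, Continuous (fun u : EuclideanSpace ℝ (Fin d) => u j) :=
    fun j => (EuclideanSpace.proj (𝕜 := ℝ) j).continuous
  have hbaryeq : ∀ i, bary d pol i = ∫ u, u ∂pol i := by
    intro i
    ext j
    have h := (EuclideanSpace.proj (𝕜 := ℝ) j).integral_comp_comm (hIntId i)
    simpa [bary, PiLp.proj_apply] using h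
  have hbaryU : ∀ i, bary d pol i ∈ U := by
    intro i
    haveI := hprob i
    rw [hbaryeq i]
    exact hUconv.integral_mem hUclosed (haeU i) (hIntId i)
  -- the induced transition matrix
  set P := PmatM d d (fun u _ j => u j) pol with hPdef
  have hPbar : ∀ i j, P i j = bary d pol i j := fun i j => rfl
  have hPnn : ∀ i j, 0 ≤ P i j := fun i j => (hUsub (hbaryU i)).1 j
  have hProw : ∀ i, ∑ j, P i j = 1 := by
    intro i
    have := (hUsub (hbaryU i)).2
    simpa [hPbar] using this
  have hPdirac : PmatM d d (fun u _ j => u j) (fun i => Measure.dirac (bary d pol i)) = P := by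
    ext i j
    show ∫ u, u j ∂Measure.dirac (bary d pol i) = P i j
    rw [integral_dirac' _ _ ((hcoord j).stronglyMeasurable)]
    rfl
  -- the expected reward vector
  set r : Fin d → ℝ := fun i => ∫ u, g i u ∂pol i with hrdef
  have hrv : ∀ k i, rvecM d d (fun t i u => dis t * g i u) pol k i = dis k * r i := by
    intro k i
    exact integral_const_mul (dis k) (fun u => g i u)
  have hJensen : ∀ i, r i ≤ g i (bary d pol i) := by
    intro i
    haveI := hprob i
    rw [hbaryeq i]
    exact (hgconc i).le_map_integral (hgcont i).continuousOn hUclosed (haeU i) (hIntId i)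
      (hIntC i _ (hgcont i))
  -- stochasticity of powers of P
  have hpow : ∀ k : ℕ, (∀ i j, 0 ≤ (P ^ k) i j) ∧ (∀ i, ∑ j, (P ^ k) i j = 1) := by
    intro k
    induction k with
    | zero =>
      constructor
      · intro i j
        by_cases h : i = j <;> simp [Matrix.one_apply, h]
      · intro i
        simp [Matrix.one_apply]
    | succ k ih =>
      constructor
      · intro i j
        rw [pow_succ, Matrix.mul_apply]
        exact Finset.sum_nonneg fun l _ => mul_nonneg (ih.1 i l) (hPnn l j)
      · intro i
        calc ∑ j, (P ^ (k + 1)) i j = ∑ j, ∑ l, (P ^ k) i l * P l j := by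
              simp [pow_succ, Matrix.mul_apply]
          _ = ∑ l, (P ^ k) i l * ∑ j, P l j := by
              rw [Finset.sum_comm]
              simp [Finset.mul_sum]
          _ = 1 := by simp [hProw, ih.2 i]
  -- uniform bound on mulVec by stochastic powers
  have hmv : ∀ (k : ℕ) (v : Fin d → ℝ) (C : ℝ), (∀ j, |v j| ≤ C) →
      ∀ i, |((P ^ k).mulVec v) i| ≤ C := by
    intro k v C hC i
    have hmve : ((P ^ k).mulVec v) i = ∑ j, (P ^ k) i j * v j := by
      simp [Matrix.mulVec, dotProduct]
    rw [hmve]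
    calc |∑ j, (P ^ k) i j * v j| ≤ ∑ j, |(P ^ k) i j * v j| :=
          Finset.abs_sum_le_sum_abs _ _
      _ = ∑ j, (P ^ k) i j * |v j| := by
          refine Finset.sum_congr rfl fun j _ => ?_
          rw [abs_mul, abs_of_nonneg ((hpow k).1 i j)]
      _ ≤ ∑ j, (P ^ k) i j * C :=
          Finset.sum_le_sum fun j _ => mul_le_mul_of_nonneg_left (hC j) ((hpow k).1 i j)
      _ = C := by rw [← Finset.sum_mul, (hpow k).2 i, one_mul]
  set C : ℝ := ∑ j, |r j| with hCdef
  have hrC : ∀ j, |r j| ≤ C :=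
    fun j => Finset.single_le_sum (fun l _ => abs_nonneg (r l)) (Finset.mem_univ j)
  have hbd : ∀ (k m : ℕ) (i : Fin d),
      |((P ^ k).mulVec (rvecM d d (fun t i u => dis t * g i u) pol m)) i| ≤ dis m * C := by
    intro k m i
    refine hmv k _ _ (fun j => ?_) i
    rw [hrv m j, abs_mul, abs_of_nonneg (hdis m).1]
    exact mul_le_mul_of_nonneg_left (hrC j) (hdis m).1
  have hsum1 : ∀ i, Summable fun k =>
      ((P ^ k).mulVec (rvecM d d (fun t i u => dis t * g i u) pol k)) i := by
    intro i
    exact Summable.of_abs (Summable.of_nonneg_of_le (fun k => abs_nonneg _)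
      (fun k => hbd k k i) (hdissum.mul_right C))
  have hsum2 : ∀ i, Summable fun k =>
      ((P ^ k).mulVec (rvecM d d (fun t i u => dis t * g i u) pol (k + 1))) i := by
    intro i
    have hd1 : Summable fun k => dis (k + 1) * C :=
      ((summable_nat_add_iff 1).2 hdissum).mul_right C
    exact Summable.of_abs (Summable.of_nonneg_of_le (fun k => abs_nonneg _)
      (fun k => hbd k (k + 1) i) hd1)
  have hVMapply : ∀ i, VM d d (fun t i u => dis t * g i u) (fun u _ j => u j) pol i
      = ∑' k, ((P ^ k).mulVec (rvecM d d (fun t i u => dis t * g i u) pol (k + 1))) i := by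
    intro i
    simp only [VM, ← hPdef]
    exact tsum_apply (Pi.summable.mpr hsum2)
  -- the one-step splitting of J
  have hsplit : ∀ i, JM d d (fun t i u => dis t * g i u) (fun u _ j => u j) pol i
      = rvecM d d (fun t i u => dis t * g i u) pol 0 i
        + P.mulVec (VM d d (fun t i u => dis t * g i u) (fun u _ j => u j) pol) i := by
    intro i
    have h0 : JM d d (fun t i u => dis t * g i u) (fun u _ j => u j) pol i
        = ∑' k, ((P ^ k).mulVec (rvecM d d (fun t i u => dis t * g i u) pol k)) i := by
      simp only [JM, ← hPdef]
      exact tsum_apply (Pi.summable.mpr hsum1)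
    rw [h0, Summable.tsum_eq_zero_add (hsum1 i)]
    congr 1
    · simp [Matrix.one_mulVec]
    · have hstep : ∀ k : ℕ,
          ((P ^ (k + 1)).mulVec (rvecM d d (fun t i u => dis t * g i u) pol (k + 1))) i
          = ∑ j, P i j *
              ((P ^ k).mulVec (rvecM d d (fun t i u => dis t * g i u) pol (k + 1))) j := by
        intro k
        rw [pow_succ', ← Matrix.mulVec_mulVec]
        simp [Matrix.mulVec, dotProduct]
      calc (∑' k, ((P ^ (k + 1)).mulVec
              (rvecM d d (fun t i u => dis t * g i u) pol (k + 1))) i)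
          = ∑' k, ∑ j, P i j *
              ((P ^ k).mulVec (rvecM d d (fun t i u => dis t * g i u) pol (k + 1))) j :=
            tsum_congr hstep
        _ = ∑ j, ∑' k, P i j *
              ((P ^ k).mulVec (rvecM d d (fun t i u => dis t * g i u) pol (k + 1))) j :=
            Summable.tsum_finsetSum (fun j _ => (hsum2 j).mul_left _)
        _ = ∑ j, P i j * VM d d (fun t i u => dis t * g i u) (fun u _ j => u j) pol j := by
            refine Finset.sum_congr rfl fun j _ => ?_
            rw [tsum_mul_left, hVMapply j]
        _ = P.mulVec (VM d d (fun t i u => dis t * g i u) (fun u _ j => u j) pol) i := by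
            simp [Matrix.mulVec, dotProduct]
  -- the dirac policy is a relaxed control
  have hdiracctl : IsRelaxedControl d d U (fun i => Measure.dirac (bary d pol i)) := by
    intro i
    refine ⟨Measure.dirac.isProbabilityMeasure, ?_⟩
    rw [Measure.dirac_apply' _ hUclosed.measurableSet.compl]
    simp [Set.indicator_apply, hbaryU i]
  have hrvd : ∀ k i, rvecM d d (fun t i u => dis t * g i u)
      (fun i => Measure.dirac (bary d pol i)) k i = dis k * g i (bary d pol i) := by
    intro k i
    show ∫ u, dis k * g i u ∂Measure.dirac (bary d pol i) = _
    rw [integral_dirac' (fun u => dis k * g i u) _ ((continuous_const.mul (hgcont i)).stronglyMeasurable)]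
  -- the equilibrium inequality gives the reverse of Jensen
  have hkey : ∀ i, g i (bary d pol i) ≤ r i := by
    intro i
    have h1 := hopt _ hdiracctl i
    rw [hsplit i] at h1
    simp only [JcatM] at h1
    rw [hPdirac, hrvd 0 i, hrv 0 i, hdis0, one_mul, one_mul] at h1
    linarith
  have hgr : ∀ i, r i = g i (bary d pol i) := fun i => le_antisymm (hJensen i) (hkey i)
  have claim2 : ∀ t i, (∫ u, dis t * g i u ∂(pol i)) = dis t * g i (bary d pol i) := by
    intro t i
    rw [integral_const_mul (dis t) (fun u => g i u)]
    rw [show (∫ u, g i u ∂(pol i)) = r i from rfl, hgr i]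
  have hrveq : ∀ k, rvecM d d (fun t i u => dis t * g i u)
      (fun i => Measure.dirac (bary d pol i)) k
      = rvecM d d (fun t i u => dis t * g i u) pol k := by
    intro k
    funext i
    rw [hrvd k i, hrv k i, hgr i]
  have hJMeq : JM d d (fun t i u => dis t * g i u) (fun u _ j => u j)
      (fun i => Measure.dirac (bary d pol i))
      = JM d d (fun t i u => dis t * g i u) (fun u _ j => u j) pol := by
    simp only [JM, hPdirac, hrveq, hPdef]
  have hVMeq : VM d d (fun t i u => dis t * g i u) (fun u _ j => u j)
      (fun i => Measure.dirac (bary d pol i))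
      = VM d d (fun t i u => dis t * g i u) (fun u _ j => u j) pol := by
    simp only [VM, hPdirac, hrveq, hPdef]
  refine ⟨hbaryU, claim2, hJMeq, hdiracctl, ?_⟩
  intro pol' hpol' i
  calc JcatM d d (fun t i u => dis t * g i u) (fun u _ j => u j) pol'
        (fun i => Measure.dirac (bary d pol i)) i
      = JcatM d d (fun t i u => dis t * g i u) (fun u _ j => u j) pol' pol i := by
        simp only [JcatM, hVMeq]
    _ ≤ JM d d (fun t i u => dis t * g i u) (fun u _ j => u j) pol i := hopt pol' hpol' i
    _ = JM d d (fun t i u => dis t * g i u) (fun u _ j => u j)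
          (fun i => Measure.dirac (bary d pol i)) i := by rw [hJMeq]


end
end
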